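/- Let F be the free semigroup on a three-element alphabet. Then there exists a set X, a right action of F on X (i.e., a map X × F → X, (x, s) ↦ x·s, satisfying x·(st) = (x·s)·t for all x ∈ X and s, t ∈ F), an element x₀ ∈ X with X = {x₀} ∪ {x₀·s : s ∈ F} (the act is cyclic), and a map ψ: X → X which is surjective, not injective, and satisfies (x·s)ψ = (xψ)·s for all x ∈ X, s ∈ F. -/

import Mathlib

namespace Stmt8

abbrev XX : Type := ℤ ⊕ ℕ

def fA : XX → XX
  | .inl n => .inl (n + 1)
  | .inr k => if k = 0 then .inl 1 else .inr (k - 1)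

def fB : XX → XX
  | .inl n => .inl (n - 1)
  | .inr k => .inl (-(k : ℤ) - 1)

def fS : XX → XX
  | .inl n => if n ≤ 0 then .inr (-n).toNat else .inl n
  | .inr k => .inl (-(k : ℤ))

def f : Fin 3 → Function.End XX := ![fA, fB, fS]

lemma f0 : f 0 = fA := rfl
lemma f1 : f 1 = fB := rfl
lemma f2 : f 2 = fS := rfl

def myact (x : XX) (s : FreeSemigroup (Fin 3)) : XX :=
  (FreeSemigroup.lift (fun i => MulOpposite.op (f i)) s).unop x

lemma myact_mul (x : XX) (s t : FreeSemigroup (Fin 3)) :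
    myact x (s * t) = myact (myact x s) t := by
  unfold myact
  rw [map_mul]
  rfl

lemma myact_of (x : XX) (i : Fin 3) : myact x (.of i) = f i x := by
  unfold myact; rw [FreeSemigroup.lift_of]; rfl

def x0 : XX := .inl 0

def orb (x : XX) : Prop := ∃ s, x = myact x0 s

lemma orb_step {x : XX} (h : orb x) (i : Fin 3) : orb (f i x) := by
  obtain ⟨s, rfl⟩ := h
  exact ⟨s * .of i, by rw [myact_mul, myact_of]⟩

lemma orb_x0 : orb x0 :=
  ⟨.of 2 * .of 2, by
    rw [myact_mul, myact_of, myact_of, f2]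
    show x0 = fS (fS x0)
    simp [fS, x0]⟩

lemma orb_inl (n : ℤ) : orb (.inl n) := by
  induction n using Int.induction_on with
  | zero => exact orb_x0
  | succ n ih => simpa [f0, fA] using orb_step ih 0
  | pred n ih =>
      have h := orb_step ih 1
      rw [f1] at h
      have : fB (.inl (-(n:ℤ))) = .inl (-(n:ℤ) - 1) := rfl
      rwa [this] at h

lemma orb_inr (k : ℕ) : orb (.inr k) := by
  have h := orb_step (orb_inl (-(k : ℤ))) 2
  rw [f2] at h
  have : fS (.inl (-(k:ℤ))) = .inr k := by simp [fS]
  rwa [this] at h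

lemma commAB (x : XX) : fA (fB x) = fB (fA x) := by
  rcases x with n | (_ | k) <;> simp [fA, fB] <;> push_cast <;> ring

lemma commAS (x : XX) : fA (fS x) = fS (fA x) := by
  rcases x with n | (_ | k)
  · show fA (if n ≤ 0 then .inr (-n).toNat else .inl n) = fS (.inl (n + 1))
    rcases le_or_gt n 0 with h | h
    · rw [if_pos h]
      show (if (-n).toNat = 0 then (.inl 1 : XX) else .inr ((-n).toNat - 1)) =
          if n + 1 ≤ 0 then (.inr (-(n+1)).toNat : XX) else .inl (n+1)
      split_ifs <;>
        first
          | (exfalso; omega)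
          | (simp only [Sum.inl.injEq]; omega)
          | (simp only [Sum.inr.injEq]; omega)
    · rw [if_neg (by omega)]
      show (Sum.inl (n+1) : XX) = if n + 1 ≤ 0 then (.inr (-(n+1)).toNat : XX) else .inl (n+1)
      rw [if_neg (by omega)]
  · simp [fA, fS]
  · have h1 : fS (Sum.inr (k+1) : XX) = .inl (-(↑(k+1) : ℤ)) := rfl
    have h2 : fA (Sum.inr (k+1) : XX) = .inr k := by simp [fA]
    rw [h1, h2]
    show (Sum.inl (-(↑(k+1) : ℤ) + 1) : XX) = fS (Sum.inr k)
    show (Sum.inl (-(↑(k+1) : ℤ) + 1) : XX) = .inl (-(k:ℤ))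
    simp only [Sum.inl.injEq]
    push_cast
    ring

lemma commA (i : Fin 3) (x : XX) : fA (f i x) = f i (fA x) := by
  match i with
  | 0 => rfl
  | 1 => exact commAB x
  | 2 => exact commAS x

lemma comm_act (s : FreeSemigroup (Fin 3)) : ∀ x, fA (myact x s) = myact (fA x) s := by
  induction s using FreeSemigroup.recOnMul with
  | ih1 i => intro x; rw [myact_of, myact_of]; exact commA i x
  | ih2 s t hs ht => intro x; rw [myact_mul, myact_mul, ht, hs]

end Stmt8

/-- The free semigroup of rank 3 admits a cyclic non-hopfian act: there are a set `X`,
a right action of the free semigroup on `X`, a generator `x₀` of the action, and a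
surjective non-injective endomorphism `ψ` of the act. -/
theorem stmt_8 : ∃ (X : Type) (act : X → FreeSemigroup (Fin 3) → X),
    (∀ (x : X) (s t : FreeSemigroup (Fin 3)), act x (s * t) = act (act x s) t) ∧
    (∃ x₀ : X, ∀ x : X, x = x₀ ∨ ∃ s : FreeSemigroup (Fin 3), x = act x₀ s) ∧
    (∃ ψ : X → X, Function.Surjective ψ ∧ ¬ Function.Injective ψ ∧
      ∀ (x : X) (s : FreeSemigroup (Fin 3)), ψ (act x s) = act (ψ x) s) := by
  refine ⟨Stmt8.XX, Stmt8.myact, Stmt8.myact_mul, ⟨Stmt8.x0, ?_⟩, Stmt8.fA, ?_, ?_, fun x s => Stmt8.comm_act s x⟩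
  · rintro (n | k)
    · exact Or.inr (Stmt8.orb_inl n)
    · exact Or.inr (Stmt8.orb_inr k)
  · rintro (n | k)
    · exact ⟨.inl (n - 1), by simp [Stmt8.fA]⟩
    · exact ⟨.inr (k + 1), by simp [Stmt8.fA]⟩
  · intro h
    have : (Sum.inl 0 : Stmt8.XX) = .inr 0 := h (by simp [Stmt8.fA])
    simp at this
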